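/- Let λ : Fin 2 → Fin 2 → ℝ be a joint probability distribution of two spins taking values z 0 = 1, z 1 = −1 (λ i j ≥ 0 for all i j, and ∑ i, ∑ j, λ i j = 1). Define the marginals μ i := ∑ j, λ i j and ν j := ∑ i, λ i j, the covariance η := (∑ i, ∑ j, z i · z j · λ i j) − (∑ i, z i · μ i)·(∑ j, z j · ν j), and the mutual information in bits I := (∑ i, −(μ i)·Real.logb 2 (μ i)) + (∑ j, −(ν j)·Real.logb 2 (ν j)) − (∑ i, ∑ j, −(λ i j)·Real.logb 2 (λ i j)). Let s := Real.sqrt (1 − |η|). Then I ≤ −((1 + s)/2)·Real.logb 2 ((1 + s)/2) − ((1 − s)/2)·Real.logb 2 ((1 − s)/2). -/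

import Mathlib

open scoped BigOperators

noncomputable section

/-- Spin values: `z 0 = 1`, `z 1 = -1`. -/
def z : Fin 2 → ℝ := ![1, -1]

/-- First marginal of a joint distribution of two spins. -/
def mu (lam : Fin 2 → Fin 2 → ℝ) (i : Fin 2) : ℝ := ∑ j, lam i j

/-- Second marginal of a joint distribution of two spins. -/
def nu (lam : Fin 2 → Fin 2 → ℝ) (j : Fin 2) : ℝ := ∑ i, lam i j

/-- The covariance `η = ⟨z₁z₂⟩ - ⟨z₁⟩⟨z₂⟩` of the two spins. -/
def eta (lam : Fin 2 → Fin 2 → ℝ) : ℝ :=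
  (∑ i, ∑ j, z i * z j * lam i j) - (∑ i, z i * mu lam i) * (∑ j, z j * nu lam j)

/-- The mutual information (in bits) of the two spins. -/
def MI (lam : Fin 2 → Fin 2 → ℝ) : ℝ :=
  (∑ i, -(mu lam i) * Real.logb 2 (mu lam i)) +
    (∑ j, -(nu lam j) * Real.logb 2 (nu lam j)) -
    ∑ i, ∑ j, -(lam i j) * Real.logb 2 (lam i j)

namespace MIUB
open Real Set


/-- key concavity lemma -/
lemma key_log {x A D : ℝ} (hx : 0 < x) (hA : 0 < A) (hAD : A ≤ D) :
    A * Real.log ((x + D)/x) ≤ D * Real.log ((x + A)/x) := by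
  have hD : 0 < D := hA.trans_le hAD
  set θ := A / D with hθdef
  have hθ0 : 0 ≤ θ := by positivity
  have hθ1 : θ ≤ 1 := by rw [hθdef, div_le_one hD]; exact hAD
  have hmem : (x + D)/x ∈ Ioi (0:ℝ) := by
    simp only [mem_Ioi]; positivity
  have hmem1 : (1:ℝ) ∈ Ioi (0:ℝ) := by norm_num
  have hcc := strictConcaveOn_log_Ioi.concaveOn.2 hmem hmem1 hθ0 (show (0:ℝ) ≤ 1 - θ by linarith) (show θ + (1 - θ) = 1 by ring)
  have hpt : θ • ((x + D)/x) + (1 - θ) • (1:ℝ) = (x + A)/x := by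
    have hx' : x ≠ 0 := hx.ne'
    have hD' : D ≠ 0 := hD.ne'
    rw [hθdef]
    simp only [smul_eq_mul]
    field_simp
    ring
  rw [hpt] at hcc
  simp only [smul_eq_mul, Real.log_one, mul_zero, add_zero] at hcc
  calc A * Real.log ((x + D)/x) = D * (θ * Real.log ((x + D)/x)) := by
        rw [hθdef]
        field_simp
    _ ≤ D * Real.log ((x + A)/x) := by
        exact mul_le_mul_of_nonneg_left hcc hD.le



/-- Two-term log-sum inequality, subtraction form with junk values at 0. -/
lemma logsum2 {a b c d : ℝ} (ha : 0 ≤ a) (hb : 0 ≤ b) (hac : a ≤ c) (hbd : b ≤ d) :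
    (a + b) * Real.log (a + b) - (a + b) * Real.log (c + d) ≤
      (a * Real.log a - a * Real.log c) + (b * Real.log b - b * Real.log d) := by
  have hc : 0 ≤ c := ha.trans hac
  have hd : 0 ≤ d := hb.trans hbd
  rcases eq_or_lt_of_le hc with hc0 | hc0
  · -- c = 0, hence a = 0
    have ha0 : a = 0 := le_antisymm (hac.trans hc0.symm.le) ha
    subst ha0
    simp [← hc0]
  rcases eq_or_lt_of_le hd with hd0 | hd0
  · have hb0 : b = 0 := le_antisymm (hbd.trans hd0.symm.le) hb
    subst hb0
    simp [← hd0]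
  -- now c, d > 0
  rcases eq_or_lt_of_le ha with ha0 | ha0
  · subst ha0
    simp only [zero_add, Real.log_zero, mul_zero, zero_mul, sub_zero, zero_sub, neg_zero]
    have : Real.log d ≤ Real.log (c + d) := Real.log_le_log hd0 (by linarith)
    nlinarith
  rcases eq_or_lt_of_le hb with hb0 | hb0
  · subst hb0
    simp only [add_zero, Real.log_zero, mul_zero, zero_mul, sub_zero, zero_sub, neg_zero]
    have : Real.log c ≤ Real.log (c + d) := Real.log_le_log hc0 (by linarith)
    nlinarith
  -- main case: all positive. Use convexity of x ↦ x * log x.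
  have hcd : 0 < c + d := by linarith
  have hmem1 : a / c ∈ Ici (0:ℝ) := by simp [le_of_lt, div_pos ha0 hc0]
  have hmem2 : b / d ∈ Ici (0:ℝ) := by simp [le_of_lt, div_pos hb0 hd0]
  have hw1 : (0:ℝ) ≤ c / (c + d) := by positivity
  have hw2 : (0:ℝ) ≤ d / (c + d) := by positivity
  have hww : c / (c + d) + d / (c + d) = 1 := by field_simp
  have hcx := convexOn_mul_log.2 hmem1 hmem2 hw1 hw2 hww
  simp only [smul_eq_mul] at hcx
  have hpt : c / (c + d) * (a / c) + d / (c + d) * (b / d) = (a + b) / (c + d) := by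
    field_simp
  rw [hpt] at hcx
  -- hcx : (a+b)/(c+d) * log ((a+b)/(c+d)) ≤ c/(c+d)*(a/c * log (a/c)) + d/(c+d)*(b/d * log (b/d))
  have h1 : Real.log ((a+b)/(c+d)) = Real.log (a+b) - Real.log (c+d) :=
    Real.log_div (by linarith) (by linarith)
  have h2 : Real.log (a/c) = Real.log a - Real.log c := Real.log_div (ne_of_gt ha0) (ne_of_gt hc0)
  have h3 : Real.log (b/d) = Real.log b - Real.log d := Real.log_div (ne_of_gt hb0) (ne_of_gt hd0)
  rw [h1, h2, h3] at hcx
  have hexp : c / (c + d) * (a / c * (Real.log a - Real.log c)) +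
      d / (c + d) * (b / d * (Real.log b - Real.log d)) =
      (a * (Real.log a - Real.log c) + b * (Real.log b - Real.log d)) / (c + d) := by
    field_simp
  rw [hexp, div_mul_eq_mul_div, div_le_div_iff_of_pos_right hcd] at hcx
  nlinarith [hcx]

/-- φ(x,y): minus the contribution of one column to conditional entropy. -/
def phi (x y : ℝ) : ℝ := x * Real.log x + y * Real.log y - (x + y) * Real.log (x + y)

lemma phi_subadd {x₁ y₁ x₂ y₂ : ℝ} (hx₁ : 0 ≤ x₁) (hy₁ : 0 ≤ y₁) (hx₂ : 0 ≤ x₂) (hy₂ : 0 ≤ y₂) :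
    phi (x₁ + x₂) (y₁ + y₂) ≤ phi x₁ y₁ + phi x₂ y₂ := by
  have h1 := logsum2 (a := x₁) (b := x₂) (c := x₁ + y₁) (d := x₂ + y₂) hx₁ hx₂
    (by linarith) (by linarith)
  have h2 := logsum2 (a := y₁) (b := y₂) (c := x₁ + y₁) (d := x₂ + y₂) hy₁ hy₂
    (by linarith) (by linarith)
  simp only [phi]
  have e : x₁ + y₁ + (x₂ + y₂) = x₁ + x₂ + (y₁ + y₂) := by ring
  rw [e] at h1 h2
  linarith

lemma phi_smul {θ x y : ℝ} (hθ : 0 ≤ θ) : phi (θ * x) (θ * y) = θ * phi x y := by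
  rcases eq_or_lt_of_le hθ with h | h
  · simp [phi, ← h]
  · simp only [phi, ← mul_add]
    rcases eq_or_ne x 0 with hx | hx
    · rcases eq_or_ne y 0 with hy | hy
      · simp [hx, hy]
      · simp only [hx, mul_zero, zero_mul, zero_add, Real.log_zero, zero_mul]
        rw [Real.log_mul (ne_of_gt h) hy]
        ring
    · rcases eq_or_ne y 0 with hy | hy
      · simp only [hy, mul_zero, zero_mul, add_zero, Real.log_zero]
        rw [Real.log_mul (ne_of_gt h) hx]
        ring
      · rcases eq_or_ne (x + y) 0 with hxy | hxy
        · rw [hxy, mul_zero, zero_mul, Real.log_mul (ne_of_gt h) hx,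
            Real.log_mul (ne_of_gt h) hy]
          have : y = -x := by linarith
          subst this
          ring_nf
        · rw [Real.log_mul (ne_of_gt h) hx, Real.log_mul (ne_of_gt h) hy,
            Real.log_mul (ne_of_gt h) hxy]
          ring

lemma phi_convex_comb {θ θ' x₁ y₁ x₂ y₂ : ℝ} (hθ : 0 ≤ θ) (hθ' : 0 ≤ θ')
    (hx₁ : 0 ≤ x₁) (hy₁ : 0 ≤ y₁) (hx₂ : 0 ≤ x₂) (hy₂ : 0 ≤ y₂) :
    phi (θ * x₁ + θ' * x₂) (θ * y₁ + θ' * y₂) ≤ θ * phi x₁ y₁ + θ' * phi x₂ y₂ := by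
  rw [← phi_smul (x := x₁) (y := y₁) hθ, ← phi_smul (x := x₂) (y := y₂) hθ']
  exact phi_subadd (by positivity) (by positivity) (by positivity) (by positivity)




lemma psi_hasDeriv {K x : ℝ} (hK : 0 < K) (hx : 0 < x) (hx1 : x < 1)
    (hR : 0 < (1 - x)^2 - 4*K) :
    ∃ y, y ≤ 0 ∧ HasDerivAt (fun s => negMulLog ((1 + s - Real.sqrt ((1-s)^2 - 4*K))/2)
      + negMulLog ((1 + s + Real.sqrt ((1-s)^2 - 4*K))/2) - negMulLog s) y x := by
  have hgx0 : 0 < Real.sqrt ((1-x)^2 - 4*K) := Real.sqrt_pos.2 hR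
  have hgx2 : (Real.sqrt ((1-x)^2 - 4*K))^2 = (1-x)^2 - 4*K := Real.sq_sqrt hR.le
  have hgxlt : Real.sqrt ((1-x)^2 - 4*K) < 1 - x := by nlinarith
  have hu0 : 0 < (1 + x - Real.sqrt ((1-x)^2 - 4*K))/2 := by nlinarith
  have hv0 : 0 < (1 + x + Real.sqrt ((1-x)^2 - 4*K))/2 := by nlinarith
  -- derivative of the radicand
  have hr' : HasDerivAt (fun s : ℝ => (1-s)^2 - 4*K) (-(2*(1-x))) x := by
    have h1 : HasDerivAt (fun s : ℝ => 1 - s) (-1) x := (hasDerivAt_id x).const_sub 1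
    have h2 := (h1.fun_pow 2).sub_const (4*K)
    exact h2.congr_deriv (by push_cast; ring)
  have hg : HasDerivAt (fun s : ℝ => Real.sqrt ((1-s)^2 - 4*K))
      (-(2*(1-x)) / (2 * Real.sqrt ((1-x)^2 - 4*K))) x := hr'.sqrt (ne_of_gt hR)
  have hu' : HasDerivAt (fun s : ℝ => (1 + s - Real.sqrt ((1-s)^2 - 4*K))/2)
      ((1 - (-(2*(1-x)) / (2 * Real.sqrt ((1-x)^2 - 4*K))))/2) x :=
    (((hasDerivAt_id x).const_add 1).sub hg).div_const 2
  have hv' : HasDerivAt (fun s : ℝ => (1 + s + Real.sqrt ((1-s)^2 - 4*K))/2)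
      ((1 + (-(2*(1-x)) / (2 * Real.sqrt ((1-x)^2 - 4*K))))/2) x :=
    (((hasDerivAt_id x).const_add 1).add hg).div_const 2
  have hNLu : HasDerivAt (fun s : ℝ => negMulLog ((1 + s - Real.sqrt ((1-s)^2 - 4*K))/2))
      ((-Real.log ((1 + x - Real.sqrt ((1-x)^2 - 4*K))/2) - 1) *
        ((1 - (-(2*(1-x)) / (2 * Real.sqrt ((1-x)^2 - 4*K))))/2)) x :=
    HasDerivAt.comp x (Real.hasDerivAt_negMulLog hu0.ne') hu'
  have hNLv : HasDerivAt (fun s : ℝ => negMulLog ((1 + s + Real.sqrt ((1-s)^2 - 4*K))/2))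
      ((-Real.log ((1 + x + Real.sqrt ((1-x)^2 - 4*K))/2) - 1) *
        ((1 + (-(2*(1-x)) / (2 * Real.sqrt ((1-x)^2 - 4*K))))/2)) x :=
    HasDerivAt.comp x (Real.hasDerivAt_negMulLog hv0.ne') hv'
  have hNLx : HasDerivAt (fun s : ℝ => negMulLog s) (-Real.log x - 1) x :=
    Real.hasDerivAt_negMulLog (ne_of_gt hx)
  refine ⟨_, ?_, (hNLu.add hNLv).sub hNLx⟩
  -- show the derivative value is ≤ 0
  set gx := Real.sqrt ((1-x)^2 - 4*K) with hgxdef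
  set u := (1 + x - gx)/2 with hudef
  set v := (1 + x + gx)/2 with hvdef
  set A := (1 - x - gx)/2 with hAdef
  set Dd := (1 - x + gx)/2 with hDdef
  have hA0 : 0 < A := by rw [hAdef]; linarith
  have hADd : A ≤ Dd := by rw [hAdef, hDdef]; linarith
  have hxu : x + A = u := by rw [hAdef, hudef]; ring
  have hxv : x + Dd = v := by rw [hDdef, hvdef]; ring
  have key := key_log hx hA0 hADd
  have l1 : Real.log ((x + Dd)/x) = Real.log v - Real.log x := by
    rw [hxv]; exact Real.log_div (ne_of_gt hv0) (ne_of_gt hx)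
  have l2 : Real.log ((x + A)/x) = Real.log u - Real.log x := by
    rw [hxu]; exact Real.log_div (ne_of_gt hu0) (ne_of_gt hx)
  rw [l1, l2] at key
  -- key : A * (log v - log x) ≤ Dd * (log u - log x)
  have hkey2 : gx * Real.log x ≤ Dd * Real.log u - A * Real.log v := by
    have h3 : Dd * Real.log x - A * Real.log x = gx * Real.log x := by
      rw [hAdef, hDdef]; ring
    nlinarith [key, h3]
  have heq : (-Real.log u - 1) * ((1 - -(2*(1-x)) / (2*gx))/2) +
      (-Real.log v - 1) * ((1 + -(2*(1-x)) / (2*gx))/2) - (-Real.log x - 1) =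
      Real.log x - (Dd * Real.log u - A * Real.log v)/gx := by
    rw [hAdef, hDdef]
    field_simp
    ring
  rw [heq]
  have : Real.log x ≤ (Dd * Real.log u - A * Real.log v)/gx := by
    rw [le_div_iff₀ hgx0]
    linarith [hkey2]
  linarith


/-- The boundary case. -/
lemma coreB {a c d t : ℝ} (ha : 0 ≤ a) (hc : 0 ≤ c) (hd : 0 ≤ d) (hsum : a + c + d = 1)
    (ht0 : 0 ≤ t) (ht : t ≤ 1/2) (hK : t * (1 - t) = a * d) (had : a ≤ d) :
    negMulLog (a + c) + negMulLog (c + d) - negMulLog c ≤ negMulLog t + negMulLog (1 - t) := by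
  rcases eq_or_lt_of_le ht0 with ht0' | ht0'
  · have had0 : a * d = 0 := by rw [← hK, ← ht0']; ring
    have ha0 : a = 0 := by
      rcases mul_eq_zero.1 had0 with h | h
      · exact h
      · exact le_antisymm (h ▸ had) ha
    subst ha0
    rw [← ht0']
    simp only [zero_add, negMulLog_zero, sub_zero, negMulLog_one]
    have hcd : c + d = 1 := by linarith
    rw [hcd]
    simp
  have ht1 : t < 1 := by linarith
  have hKpos : 0 < a * d := by rw [← hK]; nlinarith
  have ha0 : 0 < a := by nlinarith
  have hd0 : 0 < d := by nlinarith
  rcases eq_or_lt_of_le hc with hc0 | hc0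
  · have hc0 : c = 0 := hc0.symm
    subst hc0
    have hroots : a = t ∨ a = 1 - t := by
      have h : (a - t) * (a - (1 - t)) = 0 := by nlinarith
      rcases mul_eq_zero.1 h with h | h
      · left; linarith
      · right; linarith
    simp only [add_zero, zero_add, negMulLog_zero, sub_zero]
    rcases hroots with h | h
    · have hdt : d = 1 - t := by linarith
      rw [h, hdt]
    · have hdt : d = t := by linarith
      rw [h, hdt]; linarith
  -- main case: c > 0, t > 0
  set K := a * d with hKdef
  set ψ : ℝ → ℝ := fun x =>
      negMulLog ((1 + x - Real.sqrt ((1-x)^2 - 4*K))/2) +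
      negMulLog ((1 + x + Real.sqrt ((1-x)^2 - 4*K))/2) - negMulLog x with hψdef
  have hcd1 : 1 - c = a + d := by linarith
  have hc1 : c < 1 := by nlinarith
  have hψc : ψ c = negMulLog (a + c) + negMulLog (c + d) - negMulLog c := by
    simp only [hψdef]
    have h1 : (1 - c)^2 - 4*K = (d - a)^2 := by rw [hKdef, hcd1]; ring
    rw [h1, Real.sqrt_sq (by linarith : (0:ℝ) ≤ d - a)]
    have e1 : (1 + c - (d - a))/2 = a + c := by linarith
    have e2 : (1 + c + (d - a))/2 = c + d := by linarith
    rw [e1, e2]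
  have hψ0 : ψ 0 = negMulLog t + negMulLog (1 - t) := by
    simp only [hψdef]
    have h1 : (1 - 0:ℝ)^2 - 4*K = (1 - 2*t)^2 := by rw [← hK]; ring
    rw [h1, Real.sqrt_sq (by linarith : (0:ℝ) ≤ 1 - 2*t)]
    have e1 : (1 + 0 - (1 - 2*t))/2 = t := by linarith
    have e2 : (1 + 0 + (1 - 2*t))/2 = 1 - t := by linarith
    rw [e1, e2, negMulLog_zero, sub_zero]
  have hanti : AntitoneOn ψ (Icc 0 c) := by
    apply antitoneOn_of_deriv_nonpos (convex_Icc 0 c)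
    · apply Continuous.continuousOn
      simp only [hψdef]
      fun_prop
    · rw [interior_Icc]
      intro x hx
      have hRx : 0 < (1 - x)^2 - 4*K := by nlinarith [hx.1, hx.2, sq_nonneg (a - d)]
      obtain ⟨y, _, hyd⟩ := psi_hasDeriv hKpos hx.1 (hx.2.trans hc1) hRx
      exact hyd.differentiableAt.differentiableWithinAt
    · rw [interior_Icc]
      intro x hx
      have hRx : 0 < (1 - x)^2 - 4*K := by nlinarith [hx.1, hx.2, sq_nonneg (a - d)]
      obtain ⟨y, hy0, hyd⟩ := psi_hasDeriv hKpos hx.1 (hx.2.trans hc1) hRx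
      have : deriv ψ x = y := hyd.deriv
      rw [this]
      exact hy0
  have hfin := hanti (show (0:ℝ) ∈ Icc 0 c from ⟨le_refl 0, hc0.le⟩)
    (show c ∈ Icc 0 c from ⟨hc0.le, le_refl c⟩) hc0.le
  rw [hψc, hψ0] at hfin
  exact hfin





lemma coreB2 {a c d t : ℝ} (ha : 0 ≤ a) (hc : 0 ≤ c) (hd : 0 ≤ d) (hsum : a + c + d = 1)
    (ht0 : 0 ≤ t) (ht : t ≤ 1/2) (hK : t * (1 - t) = a * d) :
    negMulLog (a + c) + negMulLog (c + d) - negMulLog c ≤ negMulLog t + negMulLog (1 - t) := by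
  rcases le_total a d with h | h
  · exact coreB ha hc hd hsum ht0 ht hK h
  · have h2 := coreB (a := d) (c := c) (d := a) hd hc ha (by linarith) ht0 ht
      (by rw [hK]; ring) h
    rw [add_comm d c, add_comm c a] at h2
    linarith [h2]

lemma phi_eq (x y : ℝ) : phi x y = negMulLog (x + y) - negMulLog x - negMulLog y := by
  simp only [phi, negMulLog]; ring

lemma phi_x0 (x : ℝ) : phi x 0 = 0 := by simp [phi]

lemma phi_0x (x : ℝ) : phi 0 x = 0 := by simp [phi]

/-- The general case, assuming `t*(1-t) = a*d - b*c`. -/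
lemma core {a b c d t : ℝ} (ha : 0 ≤ a) (hb : 0 ≤ b) (hc : 0 ≤ c) (hd : 0 ≤ d)
    (hsum : a + b + c + d = 1) (ht0 : 0 ≤ t) (ht : t ≤ 1/2)
    (hD : t * (1 - t) = a * d - b * c) :
    negMulLog (a + b) + negMulLog (c + d) + negMulLog (a + c) + negMulLog (b + d)
      - negMulLog a - negMulLog b - negMulLog c - negMulLog d
      ≤ negMulLog t + negMulLog (1 - t) := by
  have hGeq : negMulLog (a + b) + negMulLog (c + d) + negMulLog (a + c) + negMulLog (b + d)
      - negMulLog a - negMulLog b - negMulLog c - negMulLog d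
      = negMulLog (a + b) + negMulLog (c + d) + phi a c + phi b d := by
    rw [phi_eq, phi_eq]; ring
  rw [hGeq]
  rcases eq_or_lt_of_le hb with hb0 | hb0
  · have hb0 : b = 0 := hb0.symm
    subst hb0
    have h := coreB2 ha hc hd (by linarith) ht0 ht (by linarith [hD])
    rw [phi_eq, phi_eq]
    simp only [negMulLog_zero, zero_add, add_zero]
    linarith [h]
  rcases eq_or_lt_of_le hc with hc0 | hc0
  · have hc0 : c = 0 := hc0.symm
    subst hc0
    have h := coreB2 (a := a) (c := b) (d := d) ha hb hd (by linarith) ht0 ht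
      (by linarith [hD])
    rw [phi_eq, phi_eq]
    simp only [negMulLog_zero, zero_add, add_zero]
    linarith [h]
  -- b > 0, c > 0 : convex interpolation between the two boundary cases
  obtain rfl : d = 1 - a - b - c := by linarith
  have htt0 : 0 ≤ t * (1 - t) := by nlinarith
  set p := a + b with hpdef
  have hp0 : 0 < p := by positivity
  have h1p : 0 < 1 - p := by rw [hpdef]; linarith [hc0, hd]
  set N := b * (1 - p) + c * p with hNdef
  have hN0 : 0 < N := by positivity
  set θ := b * (1 - p) / N with hθdef
  set θ' := c * p / N with hθ'def
  have hθ0 : 0 ≤ θ := by positivity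
  have hθ'0 : 0 ≤ θ' := by positivity
  have hθθ : θ + θ' = 1 := by
    rw [hθdef, hθ'def, hNdef]
    field_simp
  set am := t * (1 - t) / (1 - p) with hamdef
  set bm := b + c * p / (1 - p) with hbmdef
  set dm := (1 - a - b - c) + c with hdmdef
  set cp := c + b * (1 - p) / p with hcpdef
  set dp := t * (1 - t) / p with hdpdef
  have ham0 : 0 ≤ am := by rw [hamdef]; positivity
  have hbm0 : 0 ≤ bm := by rw [hbmdef]; positivity
  have hdm0 : 0 ≤ dm := by rw [hdmdef]; linarith
  have hcp0 : 0 ≤ cp := by rw [hcpdef]; positivity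
  have hdp0 : 0 ≤ dp := by rw [hdpdef]; positivity
  have hN' : b * (1 - (a + b)) + c * (a + b) ≠ 0 := hN0.ne'
  have h1p' : 1 - (a + b) ≠ 0 := h1p.ne'
  have hp' : a + b ≠ 0 := hp0.ne'
  have hN'' : b * (1 - (a + b)) + (a + b) * c ≠ 0 := by rw [mul_comm (a + b) c]; exact hN'
  -- convex-combination identities
  have ia : a = θ * am + θ' * p := by
    rw [hθdef, hθ'def, hamdef, hNdef, hD, hpdef]
    field_simp
    ring
  have ic : c = θ * 0 + θ' * cp := by
    rw [hθdef, hθ'def, hcpdef, hNdef, hpdef]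
    field_simp
    ring
  have ib : b = θ * bm + θ' * 0 := by
    rw [hθdef, hθ'def, hbmdef, hNdef, hpdef]
    field_simp
    ring
  have id' : (1 - a - b - c) = θ * dm + θ' * dp := by
    rw [hθdef, hθ'def, hdmdef, hdpdef, hNdef, hD, hpdef]
    field_simp
    ring
  -- the two convexity estimates
  have h1 : phi a c ≤ θ' * phi p cp := by
    have := phi_convex_comb hθ0 hθ'0 ham0 (le_refl (0:ℝ)) hp0.le hcp0
    rw [← ia, ← ic] at this
    rw [phi_x0, mul_zero, zero_add] at this
    exact this
  have h2 : phi b (1 - a - b - c) ≤ θ * phi bm dm := by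
    have := phi_convex_comb hθ0 hθ'0 hbm0 hdm0 (le_refl (0:ℝ)) hdp0
    rw [← ib, ← id'] at this
    rw [phi_0x, mul_zero, add_zero] at this
    exact this
  -- endpoint bounds from coreB2
  have hxb : negMulLog p + negMulLog (bm + dm) - negMulLog bm
      ≤ negMulLog t + negMulLog (1 - t) := by
    have hs : am + bm + dm = 1 := by
      rw [hamdef, hbmdef, hdmdef, hD, hpdef]
      field_simp
      ring_nf
      try exact Or.inl trivial
    have hk : t * (1 - t) = am * dm := by
      rw [hamdef, hdmdef, hpdef]
      rw [hD]
      field_simp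
      ring_nf
      try exact Or.inl trivial
    have h := coreB2 ham0 hbm0 hdm0 hs ht0 ht hk
    have he : am + bm = p := by
      rw [hamdef, hbmdef, hD, hpdef]
      field_simp
      ring
    have he2 : bm + dm = bm + dm := rfl
    rw [he] at h
    linarith [h]
  have hyb : negMulLog (1 - p) + negMulLog (p + cp) - negMulLog cp
      ≤ negMulLog t + negMulLog (1 - t) := by
    have hs : p + cp + dp = 1 := by
      rw [hcpdef, hdpdef, hD, hpdef]
      field_simp
      ring
    have hk : t * (1 - t) = p * dp := by
      rw [hdpdef]
      field_simp
    have h := coreB2 hp0.le hcp0 hdp0 hs ht0 ht hk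
    have he : cp + dp = 1 - p := by
      rw [hcpdef, hdpdef, hD, hpdef]
      field_simp
      ring
    rw [he] at h
    linarith [h]
  -- assembly
  have hcd1 : c + (1 - a - b - c) = 1 - p := by rw [hpdef]; ring
  rw [hcd1]
  have hmul1 : θ * (negMulLog p + negMulLog (bm + dm) - negMulLog bm)
      ≤ θ * (negMulLog t + negMulLog (1 - t)) := mul_le_mul_of_nonneg_left hxb hθ0
  have hmul2 : θ' * (negMulLog (1 - p) + negMulLog (p + cp) - negMulLog cp)
      ≤ θ' * (negMulLog t + negMulLog (1 - t)) := mul_le_mul_of_nonneg_left hyb hθ'0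
  have hrhs : θ * (negMulLog t + negMulLog (1 - t)) + θ' * (negMulLog t + negMulLog (1 - t))
      = negMulLog t + negMulLog (1 - t) := by
    linear_combination (negMulLog t + negMulLog (1 - t)) * hθθ
  have hdm1 : negMulLog dm = negMulLog (1 - p) := by
    have : dm = 1 - p := by rw [hdmdef, hpdef]; ring
    rw [this]
  clear_value p N θ θ' am bm dm cp dp
  have hmid : negMulLog p + negMulLog (1 - p) + θ * phi bm dm + θ' * phi p cp
      = θ * (negMulLog p + negMulLog (bm + dm) - negMulLog bm) +
        θ' * (negMulLog (1 - p) + negMulLog (p + cp) - negMulLog cp) := by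
    rw [phi_eq, phi_eq, hdm1]
    linear_combination (-(negMulLog p + negMulLog (1 - p))) * hθθ
  linarith [h1, h2, hmul1, hmul2, hrhs, hmid]


end MIUB

/-- Theorem 2, upper bound UB with `s = √(1 - |η|)`:
`I ≤ 𝓛((1+s)/2) + 𝓛((1-s)/2)`. -/
theorem mutual_information_upper_bound (lam : Fin 2 → Fin 2 → ℝ)
    (hpos : ∀ i j, 0 ≤ lam i j) (hsum : ∑ i, ∑ j, lam i j = 1) :
    MI lam ≤
      -((1 + Real.sqrt (1 - |eta lam|)) / 2) *
          Real.logb 2 ((1 + Real.sqrt (1 - |eta lam|)) / 2) -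
        ((1 - Real.sqrt (1 - |eta lam|)) / 2) *
          Real.logb 2 ((1 - Real.sqrt (1 - |eta lam|)) / 2) := by
  have hlog2 : (0:ℝ) < Real.log 2 := Real.log_pos (by norm_num)
  have ha := hpos 0 0
  have hb := hpos 0 1
  have hc := hpos 1 0
  have hd := hpos 1 1
  have hsum' : lam 0 0 + lam 0 1 + lam 1 0 + lam 1 1 = 1 := by
    have h := hsum
    simp [Fin.sum_univ_two] at h
    linarith
  have heta : eta lam = 4 * (lam 0 0 * lam 1 1 - lam 0 1 * lam 1 0) := by
    simp only [eta, mu, nu, z, Fin.sum_univ_two, Matrix.cons_val_zero, Matrix.cons_val_one,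
      Matrix.head_cons]
    nlinarith [hsum']
  have hMI : MI lam = (Real.negMulLog (lam 0 0 + lam 0 1) + Real.negMulLog (lam 1 0 + lam 1 1) +
      Real.negMulLog (lam 0 0 + lam 1 0) + Real.negMulLog (lam 0 1 + lam 1 1) -
      Real.negMulLog (lam 0 0) - Real.negMulLog (lam 0 1) - Real.negMulLog (lam 1 0) -
      Real.negMulLog (lam 1 1)) / Real.log 2 := by
    simp only [MI, mu, nu, Fin.sum_univ_two, Real.logb, Real.negMulLog_def]
    field_simp
    ring
  set s := Real.sqrt (1 - |eta lam|) with hsdef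
  have habs4 : |eta lam| = 4 * |lam 0 0 * lam 1 1 - lam 0 1 * lam 1 0| := by
    rw [heta, abs_mul, abs_of_nonneg (by norm_num : (0:ℝ) ≤ 4)]
  have habs1 : |eta lam| ≤ 1 := by
    rw [habs4]
    have h1 : |lam 0 0 * lam 1 1 - lam 0 1 * lam 1 0| ≤ 1/4 := by
      rw [abs_le]
      constructor
      · nlinarith [sq_nonneg (lam 0 1 - lam 1 0), mul_nonneg ha hd,
          sq_nonneg (lam 0 1 + lam 1 0), mul_nonneg hb hc]
      · nlinarith [sq_nonneg (lam 0 0 - lam 1 1), mul_nonneg hb hc,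
          sq_nonneg (lam 0 0 + lam 1 1), mul_nonneg ha hd]
    linarith
  have hs0 : 0 ≤ s := Real.sqrt_nonneg _
  have hs1 : s ≤ 1 := by
    calc s ≤ Real.sqrt 1 := Real.sqrt_le_sqrt (by linarith [abs_nonneg (eta lam)])
      _ = 1 := Real.sqrt_one
  have hsq : s^2 = 1 - |eta lam| := Real.sq_sqrt (by linarith)
  have ht'0 : 0 ≤ (1 - s)/2 := by linarith
  have ht' : (1 - s)/2 ≤ 1/2 := by linarith
  have htt : (1 - s)/2 * (1 - (1 - s)/2) = |lam 0 0 * lam 1 1 - lam 0 1 * lam 1 0| := by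
    have h1 : (1 - s)/2 * (1 - (1 - s)/2) = (1 - s^2)/4 := by ring
    rw [h1, hsq]
    rw [habs4] at *
    linarith
  have hRHS : -((1 + s) / 2) * Real.logb 2 ((1 + s) / 2) - (1 - s) / 2 * Real.logb 2 ((1 - s) / 2)
      = (Real.negMulLog ((1 - s)/2) + Real.negMulLog (1 - (1 - s)/2)) / Real.log 2 := by
    have h1 : 1 - (1 - s)/2 = (1 + s)/2 := by ring
    rw [h1]
    simp only [Real.logb, Real.negMulLog_def]
    field_simp
    ring
  rw [hMI, hRHS]
  gcongr
  rcases le_total (lam 0 1 * lam 1 0) (lam 0 0 * lam 1 1) with h | h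
  · have habs : |lam 0 0 * lam 1 1 - lam 0 1 * lam 1 0| = lam 0 0 * lam 1 1 - lam 0 1 * lam 1 0 :=
      abs_of_nonneg (by linarith)
    rw [habs] at htt
    exact MIUB.core ha hb hc hd hsum' ht'0 ht' htt
  · have habs : |lam 0 0 * lam 1 1 - lam 0 1 * lam 1 0| = lam 0 1 * lam 1 0 - lam 0 0 * lam 1 1 := by
      rw [abs_sub_comm]
      exact abs_of_nonneg (by linarith)
    rw [habs] at htt
    have hcore := MIUB.core hb ha hd hc (by linarith) ht'0 ht' (by linarith [htt])
    rw [add_comm (lam 0 1) (lam 0 0), add_comm (lam 1 1) (lam 1 0)] at hcore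
    linarith [hcore]

end
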